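/- Let L be an n-dimensional antisymmetric ℤ_p-algebra and M ⊆ L an n-dimensional submodule. Then the submodules [M,M] and [L,L] have the same rank as ℤ_p-modules. -/

import Mathlib

/-- The submodule generated by all brackets `f a b` with `a ∈ S`, `b ∈ T`. -/
noncomputable def bracketSub {p : ℕ} [Fact p.Prime] {L : Type*} [AddCommGroup L] [Module ℤ_[p] L]
    (f : L →ₗ[ℤ_[p]] L →ₗ[ℤ_[p]] L) (S T : Submodule ℤ_[p] L) : Submodule ℤ_[p] L :=
  Submodule.span ℤ_[p] {z | ∃ a ∈ S, ∃ b ∈ T, z = f a b}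

theorem stmt9 (p : ℕ) [Fact p.Prime] (n : ℕ) {L : Type*} [AddCommGroup L]
    [Module ℤ_[p] L] [Module.Free ℤ_[p] L] [Module.Finite ℤ_[p] L]
    (hL : Module.finrank ℤ_[p] L = n)
    (f : L →ₗ[ℤ_[p]] L →ₗ[ℤ_[p]] L) (hanti : ∀ z : L, f z z = 0)
    (M : Submodule ℤ_[p] L) (hM : Module.finrank ℤ_[p] M = n) :
    Module.finrank ℤ_[p] (bracketSub f M M) =
      Module.finrank ℤ_[p] (bracketSub f ⊤ ⊤) := by
  classical
  -- L/M has rank zero: every element of L has a nonzero multiple in M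
  have hq : Module.rank ℤ_[p] (L ⧸ M) = 0 := by
    have h1 := rank_quotient_add_rank_of_isDomain M
    have h2 : Module.rank ℤ_[p] L = n := by rw [← hL, Module.finrank_eq_rank]
    have h3 : Module.rank ℤ_[p] M = n := by rw [← hM, Module.finrank_eq_rank]
    rw [h2, h3] at h1
    have : Module.rank ℤ_[p] (L ⧸ M) + (n : Cardinal) = 0 + (n : Cardinal) := by
      rw [h1, zero_add]
    exact (Cardinal.add_right_inj_of_lt_aleph0 (Cardinal.nat_lt_aleph0 n)).mp this
  have htor : ∀ x : L, ∃ c : ℤ_[p], c ≠ 0 ∧ c • x ∈ M := by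
    intro x
    obtain ⟨c, hc, hcx⟩ := rank_eq_zero_iff.mp hq (Submodule.Quotient.mk x)
    refine ⟨c, hc, ?_⟩
    rwa [← Submodule.Quotient.mk_smul, Submodule.Quotient.mk_eq_zero] at hcx
  -- find a single nonzero c with c • L ⊆ M
  obtain ⟨s, hs⟩ := Module.Finite.fg_top (R := ℤ_[p]) (M := L)
  choose g hg1 hg2 using htor
  set c : ℤ_[p] := ∏ x ∈ s, g x with hc
  have hcne : c ≠ 0 := Finset.prod_ne_zero_iff.mpr fun x _ => hg1 x
  have hcM : ∀ x : L, c • x ∈ M := by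
    have : (⊤ : Submodule ℤ_[p] L) ≤ M.comap (c • (LinearMap.id : L →ₗ[ℤ_[p]] L)) := by
      rw [← hs, Submodule.span_le]
      intro x hx
      rw [SetLike.mem_coe, Submodule.mem_comap]
      simp only [LinearMap.smul_apply, LinearMap.id_apply]
      rw [hc, ← Finset.mul_prod_erase s g (Finset.mem_coe.mp hx), mul_comm, mul_smul]
      exact M.smul_mem _ (hg2 x)
    intro x
    simpa using this (Submodule.mem_top (x := x))
  -- the map z ↦ (c*c) • z sends [L,L] into [M,M], injectively
  have hle : (bracketSub f ⊤ ⊤).map ((c * c) • (LinearMap.id : L →ₗ[ℤ_[p]] L)) ≤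
      bracketSub f M M := by
    rw [bracketSub, Submodule.map_span, Submodule.span_le]
    rintro _ ⟨z, ⟨a, -, b, -, rfl⟩, rfl⟩
    refine Submodule.subset_span ?_
    exact ⟨c • a, hcM a, c • b, hcM b, by simp [mul_smul, mul_comm]⟩
  have hinj : Function.Injective ((c * c) • (LinearMap.id : L →ₗ[ℤ_[p]] L)) := by
    intro x y hxy
    simp only [LinearMap.smul_apply, LinearMap.id_apply] at hxy
    exact smul_right_injective L (mul_ne_zero hcne hcne) hxy
  refine le_antisymm ?_ ?_
  · exact Submodule.finrank_mono (Submodule.span_mono (by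
      rintro z ⟨a, ha, b, hb, rfl⟩; exact ⟨a, trivial, b, trivial, rfl⟩))
  · have : Function.Injective
        (((c * c) • (LinearMap.id : L →ₗ[ℤ_[p]] L)).restrict
          (p := bracketSub f ⊤ ⊤) (q := bracketSub f M M)
          (fun x hx => hle ⟨x, hx, rfl⟩)) := by
      intro x y hxy
      exact Subtype.ext (hinj (congrArg Subtype.val hxy))
    exact LinearMap.finrank_le_finrank_of_injective this
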